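/- With ψ and f as above, f'(s) = −p(p−1)·∫₀^∞ ψ(y+s)^{p−2}·ψ'(y+s)·(ψ'(y))² dy, and f'(0) > 0. -/

import Mathlib

open MeasureTheory Real Set

namespace Stmt9Aux

noncomputable def Q0 (c m k x : ℝ) : ℝ := c * Real.cosh (k*x) ^ (-m)
noncomputable def Q1 (c m k x : ℝ) : ℝ :=
  -(c*m*k) * (Real.cosh (k*x) ^ (-m-1) * Real.sinh (k*x))
noncomputable def Q2 (c m k x : ℝ) : ℝ :=
  -(c*m*k) * ((-m-1) * Real.cosh (k*x) ^ (-m-2) * (k * Real.sinh (k*x)) * Real.sinh (k*x)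
    + Real.cosh (k*x) ^ (-m-1) * (k * Real.cosh (k*x)))

lemma hinner (k x : ℝ) : HasDerivAt (fun x => Real.cosh (k*x)) (k * Real.sinh (k*x)) x := by
  have h := (Real.hasDerivAt_cosh (k*x)).comp x ((hasDerivAt_id x).const_mul k)
  simpa [mul_comm, Function.comp_def] using h

lemma hinner' (k x : ℝ) : HasDerivAt (fun x => Real.sinh (k*x)) (k * Real.cosh (k*x)) x := by
  have h := (Real.hasDerivAt_sinh (k*x)).comp x ((hasDerivAt_id x).const_mul k)
  simpa [mul_comm, Function.comp_def] using h

lemma hD1 (c m k x : ℝ) : HasDerivAt (fun x => Q0 c m k x) (Q1 c m k x) x := by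
  have h2 : HasDerivAt (fun x => Real.cosh (k*x) ^ (-m))
      ((k * Real.sinh (k*x)) * (-m) * Real.cosh (k*x) ^ (-m-1)) x :=
    (hinner k x).rpow_const (Or.inl (Real.cosh_pos _).ne')
  have h3 := h2.const_mul c
  refine h3.congr_deriv ?_
  simp only [Q1]; ring

lemma hD2 (c m k x : ℝ) : HasDerivAt (fun x => Q1 c m k x) (Q2 c m k x) x := by
  have hg : HasDerivAt (fun x => Real.cosh (k*x) ^ (-m-1))
      ((k * Real.sinh (k*x)) * (-m-1) * Real.cosh (k*x) ^ (-m-1-1)) x :=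
    (hinner k x).rpow_const (Or.inl (Real.cosh_pos _).ne')
  have hmul := ((hg.mul (hinner' k x)).const_mul (-(c*m*k)))
  refine hmul.congr_deriv ?_
  have he : -m-1-1 = -m-2 := by ring
  simp only [Q1, Q2, he]; ring

lemma abs_sinh_le_cosh (x : ℝ) : |Real.sinh x| ≤ Real.cosh x := by
  rw [Real.abs_sinh, ← Real.cosh_abs]; exact (Real.sinh_lt_cosh _).le

lemma rpow_step (a x : ℝ) (hx : 0 < x) : x ^ (a - 1) * x = x ^ a := by
  have := Real.rpow_add_one hx.ne' (a-1)
  simpa using this.symm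

lemma hQ1bound (c m k : ℝ) (hc : 0 < c) (hm : 0 < m) (hk : 0 < k) (x : ℝ) :
    |Q1 c m k x| ≤ c*m*k * Real.cosh (k*x) ^ (-m) := by
  have hcp := Real.cosh_pos (k*x)
  have h1 : |Q1 c m k x| = (c*m*k) * (Real.cosh (k*x) ^ (-m-1) * |Real.sinh (k*x)|) := by
    simp only [Q1, abs_mul, abs_neg]
    rw [abs_of_pos (by positivity), abs_of_pos (Real.rpow_pos_of_pos hcp _),
      abs_of_pos hm, abs_of_pos hk]
  rw [h1]
  have h2 : Real.cosh (k*x) ^ (-m-1) * |Real.sinh (k*x)| ≤ Real.cosh (k*x) ^ (-m) := by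
    calc Real.cosh (k*x) ^ (-m-1) * |Real.sinh (k*x)|
        ≤ Real.cosh (k*x) ^ (-m-1) * Real.cosh (k*x) :=
          mul_le_mul_of_nonneg_left (abs_sinh_le_cosh _) (Real.rpow_nonneg hcp.le _)
      _ = Real.cosh (k*x) ^ (-m) := by
          have := rpow_step (-m) _ hcp; rw [show (-m-1 : ℝ) = -m - 1 by ring]; exact this
  exact mul_le_mul_of_nonneg_left h2 (by positivity)

lemma hQ2bound (c m k : ℝ) (hc : 0 < c) (hm : 0 < m) (hk : 0 < k) (x : ℝ) :
    |Q2 c m k x| ≤ c*m*k*((m+1)*k + k) * Real.cosh (k*x) ^ (-m) := by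
  have hcp := Real.cosh_pos (k*x)
  have hs := abs_sinh_le_cosh (k*x)
  have hs0 := abs_nonneg (Real.sinh (k*x))
  have e1 : Real.cosh (k*x) ^ (-m-2) * Real.cosh (k*x) * Real.cosh (k*x)
      = Real.cosh (k*x) ^ (-m) := by
    have a1 : Real.cosh (k*x) ^ (-m-2) * Real.cosh (k*x) = Real.cosh (k*x) ^ (-m-1) := by
      have := rpow_step (-m-1) _ hcp
      rw [show (-m-1-1 : ℝ) = -m-2 by ring] at this; exact this
    rw [a1]
    have := rpow_step (-m) _ hcp
    rw [show (-m-1 : ℝ) = -m - 1 by ring]; exact this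
  have e2 : Real.cosh (k*x) ^ (-m-1) * Real.cosh (k*x) = Real.cosh (k*x) ^ (-m) := by
    have := rpow_step (-m) _ hcp
    rw [show (-m-1 : ℝ) = -m - 1 by ring]; exact this
  have hterm1 : |(-m-1) * Real.cosh (k*x) ^ (-m-2) * (k * Real.sinh (k*x)) * Real.sinh (k*x)|
      ≤ (m+1)*k * Real.cosh (k*x) ^ (-m) := by
    have : |(-m-1) * Real.cosh (k*x) ^ (-m-2) * (k * Real.sinh (k*x)) * Real.sinh (k*x)|
        = (m+1) * Real.cosh (k*x) ^ (-m-2) * (k * |Real.sinh (k*x)|) * |Real.sinh (k*x)| := by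
      simp only [abs_mul]
      rw [abs_of_pos (Real.rpow_pos_of_pos hcp _), abs_of_pos hk,
        show |(-m-1)| = m+1 by rw [abs_of_neg (by linarith)]; ring]
    rw [this, ← e1]
    have hcpow := (Real.rpow_pos_of_pos hcp (-m-2)).le
    nlinarith [mul_le_mul_of_nonneg_left (mul_le_mul hs hs hs0 hcp.le)
      (mul_nonneg (mul_nonneg (by linarith : (0:ℝ) ≤ m+1) hk.le) hcpow)]
  have hterm2 : |Real.cosh (k*x) ^ (-m-1) * (k * Real.cosh (k*x))|
      ≤ k * Real.cosh (k*x) ^ (-m) := by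
    rw [abs_of_pos (by positivity), ← e2]; ring_nf; rfl
  calc |Q2 c m k x| ≤ (c*m*k) * (|(-m-1) * Real.cosh (k*x) ^ (-m-2) * (k * Real.sinh (k*x)) * Real.sinh (k*x)|
        + |Real.cosh (k*x) ^ (-m-1) * (k * Real.cosh (k*x))|) := by
        simp only [Q2]
        rw [abs_mul, abs_neg, abs_of_pos (show (0:ℝ) < c*m*k by positivity)]
        exact mul_le_mul_of_nonneg_left (abs_add_le _ _) (by positivity)
    _ ≤ (c*m*k) * ((m+1)*k * Real.cosh (k*x) ^ (-m) + k * Real.cosh (k*x) ^ (-m)) := by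
        exact mul_le_mul_of_nonneg_left (add_le_add hterm1 hterm2) (by positivity)
    _ = c*m*k*((m+1)*k + k) * Real.cosh (k*x) ^ (-m) := by ring

lemma aux_int {k m' C : ℝ} (hk : 0 < k) (hm' : 0 < m') {g : ℝ → ℝ}
    (hg : Continuous g) (hb : ∀ x : ℝ, |g x| ≤ C * Real.cosh (k*x) ^ (-m')) :
    IntegrableOn g (Set.Ioi (0:ℝ)) := by
  have hC : 0 ≤ C := by
    have h0 := (abs_nonneg (g 0)).trans (hb 0)
    have : Real.cosh (k*0) ^ (-m') = 1 := by norm_num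
    rw [this, mul_one] at h0; exact h0
  apply Integrable.mono' (((exp_neg_integrableOn_Ioi 0 (mul_pos hm' hk)).const_mul (C * 2 ^ m')))
  · exact hg.aestronglyMeasurable.restrict
  · filter_upwards [ae_restrict_mem measurableSet_Ioi] with x _
    rw [Real.norm_eq_abs]
    refine (hb x).trans ?_
    have h1 : Real.exp (k*x) / 2 ≤ Real.cosh (k*x) := by
      rw [Real.cosh_eq]
      have := (Real.exp_pos (-(k*x))).le; linarith
    have h2 : Real.cosh (k*x) ^ (-m') ≤ (Real.exp (k*x)/2) ^ (-m') :=
      Real.rpow_le_rpow_of_nonpos (by positivity) h1 (by linarith)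
    have h3 : (Real.exp (k*x)/2) ^ (-m') = 2 ^ m' * Real.exp (-(m'*k)*x) := by
      rw [Real.div_rpow (Real.exp_pos _).le (by norm_num), ← Real.exp_mul,
        Real.rpow_neg (by norm_num : (0:ℝ) ≤ 2),
        show k*x*(-m') = -(m'*k)*x by ring, div_eq_mul_inv, inv_inv]
      ring
    calc C * Real.cosh (k*x) ^ (-m') ≤ C * ((Real.exp (k*x)/2) ^ (-m')) :=
          mul_le_mul_of_nonneg_left h2 hC
      _ = C * 2 ^ m' * Real.exp (-(m'*k)*x) := by rw [h3]; ring

lemma sq_bound {k m A : ℝ} (hk : 0 < k) (hm : 0 < m) {g : ℝ → ℝ}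
    (hA : ∀ x, |g x| ≤ A * Real.cosh (k*x) ^ (-m)) (x : ℝ) :
    |g x ^ 2| ≤ A^2 * Real.cosh (k*x) ^ (-(2*m)) := by
  have hcp := Real.cosh_pos (k*x)
  calc |g x ^ 2| = |g x| ^ 2 := by rw [abs_pow]
    _ ≤ (A * Real.cosh (k*x) ^ (-m))^2 := pow_le_pow_left₀ (abs_nonneg _) (hA x) 2
    _ = A^2 * Real.cosh (k*x) ^ (-(2*m)) := by
        rw [mul_pow, ← Real.rpow_natCast (Real.cosh (k*x) ^ (-m)) 2,
          ← Real.rpow_mul hcp.le]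
        norm_num
        ring_nf
        exact Or.inl trivial

noncomputable def FF (ω p c m k : ℝ) (ψ : ℝ → ℝ) (s y : ℝ) : ℝ :=
  Q2 c m k y^2 - ω * Q1 c m k y^2 - p * ψ (y+s)^(p-1) * Q1 c m k y^2

noncomputable def GG (p c m k : ℝ) (ψ : ℝ → ℝ) (s y : ℝ) : ℝ :=
  -(p*(p-1)) * (ψ (y+s)^(p-2) * Q1 c m k (y+s) * Q1 c m k y^2)

end Stmt9Aux
open MeasureTheory Real Set Stmt9Aux in
theorem stmt_9 (ω p : ℝ) (hω : ω < 0) (hp : 1 < p)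
    (ψ : ℝ → ℝ)
    (hψ : ∀ x, ψ x = (-(p+1)*ω/2) ^ (1/(p-1)) *
      (Real.cosh ((p-1) * Real.sqrt (-ω) * x / 2)) ^ (-(2/(p-1))))
    (f : ℝ → ℝ)
    (hf : ∀ s, f s = ∫ y in Set.Ioi (0:ℝ),
      ((deriv (deriv ψ) y)^2 - ω * (deriv ψ y)^2 - p * ψ (y + s) ^ (p-1) * (deriv ψ y)^2)) :
    (∀ s, HasDerivAt f
      (-(p * (p-1)) * ∫ y in Set.Ioi (0:ℝ),
        ψ (y + s) ^ (p-2) * deriv ψ (y + s) * (deriv ψ y)^2) s) ∧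
    0 < deriv f 0 := by
  have hp1 : (0:ℝ) < p - 1 := by linarith
  set k : ℝ := (p-1) * Real.sqrt (-ω) / 2 with hk_def
  have hsq : 0 < Real.sqrt (-ω) := Real.sqrt_pos.mpr (by linarith)
  have hk : 0 < k := by rw [hk_def]; positivity
  set c : ℝ := (-(p+1)*ω/2) ^ (1/(p-1)) with hc_def
  have hc : 0 < c := Real.rpow_pos_of_pos (by nlinarith) _
  set m : ℝ := 2/(p-1) with hm_def
  have hm : 0 < m := by rw [hm_def]; positivity
  have hm2 : m * (p-1) = 2 := by rw [hm_def]; field_simp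
  -- ψ in normal form
  have hψ' : ∀ x, ψ x = Q0 c m k x := by
    intro x
    have harg : (p-1) * Real.sqrt (-ω) * x / 2 = k * x := by rw [hk_def]; ring
    rw [hψ x, harg]; rfl
  have hψfun : ψ = fun x => Q0 c m k x := funext hψ'
  have hψpos : ∀ x, 0 < ψ x := by
    intro x; rw [hψ' x]
    exact mul_pos hc (Real.rpow_pos_of_pos (Real.cosh_pos _) _)
  -- derivatives
  have hD1' : ∀ x, HasDerivAt ψ (Q1 c m k x) x := by
    intro x; rw [hψfun]; exact hD1 c m k x
  have hderiv1 : deriv ψ = Q1 c m k := funext fun x => (hD1' x).deriv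
  have hderiv2 : deriv (deriv ψ) = Q2 c m k := by
    rw [hderiv1]; exact funext fun x => (hD2 c m k x).deriv
  -- continuity
  have hcont_cosh : Continuous (fun x : ℝ => Real.cosh (k*x)) :=
    Real.continuous_cosh.comp (continuous_const.mul continuous_id)
  have hcont_sinh : Continuous (fun x : ℝ => Real.sinh (k*x)) :=
    Real.continuous_sinh.comp (continuous_const.mul continuous_id)
  have hcrpow : ∀ e : ℝ, Continuous (fun x : ℝ => Real.cosh (k*x) ^ e) := fun e =>
    hcont_cosh.rpow_const (fun x => Or.inl (Real.cosh_pos _).ne')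
  have hcontψ : Continuous ψ := by
    rw [hψfun]; exact continuous_const.mul (hcrpow (-m))
  have hcontQ1 : Continuous (Q1 c m k) := by
    unfold Q1; exact continuous_const.mul ((hcrpow (-m-1)).mul hcont_sinh)
  have hcontQ2 : Continuous (Q2 c m k) := by
    unfold Q2
    apply continuous_const.mul
    apply Continuous.add
    · exact ((((continuous_const.mul (hcrpow (-m-2))).mul
        (continuous_const.mul hcont_sinh))).mul hcont_sinh)
    · exact (hcrpow (-m-1)).mul (continuous_const.mul hcont_cosh)
  -- pointwise bounds
  have hQ1b := hQ1bound c m k hc hm hk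
  have hQ2b := hQ2bound c m k hc hm hk
  have hψb : ∀ x, ψ x ^ (p-1) ≤ c ^ (p-1) := by
    intro x
    apply Real.rpow_le_rpow (hψpos x).le _ (by linarith)
    rw [hψ' x]
    unfold Q0
    calc c * Real.cosh (k*x) ^ (-m) ≤ c * 1 :=
          mul_le_mul_of_nonneg_left
            (Real.rpow_le_one_of_one_le_of_nonpos (Real.one_le_cosh _) (by linarith)) hc.le
      _ = c := mul_one c
  have hB4 : ∀ x, |ψ x ^ (p-2) * Q1 c m k x| ≤ c ^ (p-1) * (m*k) := by
    intro x
    have hcp := Real.cosh_pos (k*x)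
    have hψx := hψpos x
    rw [abs_mul, abs_of_pos (Real.rpow_pos_of_pos hψx _)]
    have h1 : ψ x ^ (p-2) = c ^ (p-2) * Real.cosh (k*x) ^ (-m * (p-2)) := by
      rw [hψ' x]
      unfold Q0
      rw [Real.mul_rpow hc.le (Real.rpow_nonneg hcp.le _), ← Real.rpow_mul hcp.le]
    have e1 : c ^ (p-2) * c = c ^ (p-1) := by
      have := Real.rpow_add_one hc.ne' (p-2)
      rw [show p-2+1 = p-1 by ring] at this; exact this.symm
    have e2 : Real.cosh (k*x) ^ (-m * (p-2)) * Real.cosh (k*x) ^ (-m)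
        = Real.cosh (k*x) ^ (-(2:ℝ)) := by
      rw [← Real.rpow_add hcp]; congr 1; linear_combination (-1 : ℝ) * hm2
    calc ψ x ^ (p-2) * |Q1 c m k x|
        ≤ (c ^ (p-2) * Real.cosh (k*x) ^ (-m * (p-2))) * (c*m*k * Real.cosh (k*x) ^ (-m)) := by
          rw [h1]
          exact mul_le_mul_of_nonneg_left (hQ1b x)
            (by positivity)
      _ = (c ^ (p-2) * c) * (m*k) * (Real.cosh (k*x) ^ (-m*(p-2)) * Real.cosh (k*x) ^ (-m)) := by
          ring
      _ = c ^ (p-1) * (m*k) * Real.cosh (k*x) ^ (-(2:ℝ)) := by rw [e1, e2]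
      _ ≤ c ^ (p-1) * (m*k) * 1 :=
          mul_le_mul_of_nonneg_left
            (Real.rpow_le_one_of_one_le_of_nonpos (Real.one_le_cosh _) (by norm_num))
            (by positivity)
      _ = c ^ (p-1) * (m*k) := mul_one _
  -- integrability
  have h2m : (0:ℝ) < 2*m := by positivity
  have hQ1sqb := sq_bound hk hm hQ1b
  have hQ2sqb := sq_bound hk hm hQ2b
  have hIQ1sq : IntegrableOn (fun y => Q1 c m k y^2) (Set.Ioi (0:ℝ)) :=
    aux_int hk h2m (hcontQ1.pow 2) hQ1sqb
  have hshift : ∀ s : ℝ, Continuous (fun y : ℝ => y + s) :=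
    fun s => continuous_id.add continuous_const
  have hcontF : ∀ s, Continuous (fun y => FF ω p c m k ψ s y) := by
    intro s
    unfold FF
    exact ((hcontQ2.pow 2).sub (continuous_const.mul (hcontQ1.pow 2))).sub
      ((continuous_const.mul (((hcontψ.comp (hshift s)).rpow_const
        (fun y => Or.inl (hψpos _).ne')))).mul (hcontQ1.pow 2))
  have hcontF' : ∀ s, Continuous (fun y => GG p c m k ψ s y) := by
    intro s
    unfold GG
    exact continuous_const.mul
      ((((hcontψ.comp (hshift s)).rpow_const (fun y => Or.inl (hψpos _).ne')).mul
        (hcontQ1.comp (hshift s))).mul (hcontQ1.pow 2))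
  have hIF : ∀ s, IntegrableOn (fun y => FF ω p c m k ψ s y) (Set.Ioi (0:ℝ)) := by
    intro s
    apply aux_int hk h2m (hcontF s)
      (C := (c*m*k*((m+1)*k + k))^2 + |ω| * (c*m*k)^2 + p * c^(p-1) * (c*m*k)^2)
    intro y
    have t1 := hQ2sqb y
    have t2 : |ω * Q1 c m k y^2| ≤ |ω| * ((c*m*k)^2 * Real.cosh (k*y) ^ (-(2*m))) := by
      rw [abs_mul]
      exact mul_le_mul_of_nonneg_left (hQ1sqb y) (abs_nonneg ω)
    have t3 : |p * ψ (y+s) ^ (p-1) * Q1 c m k y^2|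
        ≤ p * c^(p-1) * ((c*m*k)^2 * Real.cosh (k*y) ^ (-(2*m))) := by
      rw [abs_mul, abs_mul, abs_of_pos (by linarith : (0:ℝ) < p),
        abs_of_pos (Real.rpow_pos_of_pos (hψpos _) _)]
      have := mul_le_mul (hψb (y+s)) (hQ1sqb y) (abs_nonneg _)
        (Real.rpow_nonneg hc.le _)
      calc p * ψ (y+s)^(p-1) * |Q1 c m k y^2|
          = p * (ψ (y+s)^(p-1) * |Q1 c m k y^2|) := by ring
        _ ≤ p * (c^(p-1) * ((c*m*k)^2 * Real.cosh (k*y) ^ (-(2*m)))) :=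
            mul_le_mul_of_nonneg_left this (by linarith)
        _ = p * c^(p-1) * ((c*m*k)^2 * Real.cosh (k*y) ^ (-(2*m))) := by ring
    have tri : |FF ω p c m k ψ s y| ≤ |Q2 c m k y^2| + |ω * Q1 c m k y^2|
        + |p * ψ (y+s) ^ (p-1) * Q1 c m k y^2| := by
      unfold FF
      exact (abs_sub _ _).trans (add_le_add_left (abs_sub _ _) _)
    calc |FF ω p c m k ψ s y| ≤ _ := tri
      _ ≤ (c*m*k*((m+1)*k + k))^2 * Real.cosh (k*y) ^ (-(2*m))
          + |ω| * ((c*m*k)^2 * Real.cosh (k*y) ^ (-(2*m)))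
          + p * c^(p-1) * ((c*m*k)^2 * Real.cosh (k*y) ^ (-(2*m))) :=
          add_le_add (add_le_add t1 t2) t3
      _ = ((c*m*k*((m+1)*k + k))^2 + |ω| * (c*m*k)^2 + p * c^(p-1) * (c*m*k)^2)
          * Real.cosh (k*y) ^ (-(2*m)) := by ring
  have hF'b : ∀ s y, |GG p c m k ψ s y| ≤ p*(p-1) * (c^(p-1)*(m*k)) * Q1 c m k y^2 := by
    intro s y
    have h1 : |GG p c m k ψ s y|
        = (p*(p-1)) * (|ψ (y+s)^(p-2) * Q1 c m k (y+s)| * Q1 c m k y^2) := by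
      unfold GG
      rw [abs_mul, abs_neg, abs_of_pos (by nlinarith : (0:ℝ) < p*(p-1)), abs_mul,
        abs_of_nonneg (sq_nonneg (Q1 c m k y))]
    rw [h1]
    calc (p*(p-1)) * (|ψ (y+s)^(p-2) * Q1 c m k (y+s)| * Q1 c m k y^2)
        ≤ (p*(p-1)) * ((c^(p-1)*(m*k)) * Q1 c m k y^2) := by
          apply mul_le_mul_of_nonneg_left _ (by nlinarith : (0:ℝ) ≤ p*(p-1))
          exact mul_le_mul_of_nonneg_right (hB4 (y+s)) (sq_nonneg _)
      _ = p*(p-1) * (c^(p-1)*(m*k)) * Q1 c m k y^2 := by ring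
  -- the main differentiation step
  have hmain : ∀ s : ℝ, Integrable (fun y => GG p c m k ψ s y) (volume.restrict (Set.Ioi 0)) ∧
      HasDerivAt (fun u => ∫ y in Set.Ioi (0:ℝ), FF ω p c m k ψ u y)
        (∫ y in Set.Ioi (0:ℝ), GG p c m k ψ s y) s := by
    intro s
    apply hasDerivAt_integral_of_dominated_loc_of_deriv_le (s := Metric.ball s 1) (Metric.ball_mem_nhds s one_pos)
    · exact Filter.Eventually.of_forall fun u => (hcontF u).aestronglyMeasurable.restrict
    · exact hIF s
    · exact (hcontF' s).aestronglyMeasurable.restrict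
    · exact Filter.Eventually.of_forall fun y u _ => by
        rw [Real.norm_eq_abs]; exact hF'b u y
    · exact hIQ1sq.const_mul _
    · refine Filter.Eventually.of_forall fun y u _ => ?_
      have h1 : HasDerivAt (fun u => ψ (y+u)) (Q1 c m k (y+u)) u := by
        have := (hD1' (y+u)).comp u ((hasDerivAt_id u).const_add y)
        simpa [Function.comp_def] using this
      have h2 := h1.rpow_const (p := p-1) (Or.inl (hψpos (y+u)).ne')
      have h3 := ((h2.const_mul p).mul_const (Q1 c m k y^2)).neg.const_add
        (Q2 c m k y^2 - ω * Q1 c m k y^2)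
      have hfun : (fun u => FF ω p c m k ψ u y)
          = fun u => (Q2 c m k y^2 - ω * Q1 c m k y^2)
            + -(p * ψ (y+u)^(p-1) * Q1 c m k y^2) := by
        funext u; unfold FF; ring
      rw [hfun]
      refine h3.congr_deriv ?_
      unfold GG
      rw [show (p-2:ℝ) = p-1-1 by ring]
      ring
  -- conclusion, part 1
  have hconc1 : ∀ s, HasDerivAt f
      (-(p * (p-1)) * ∫ y in Set.Ioi (0:ℝ),
        ψ (y + s) ^ (p-2) * deriv ψ (y + s) * (deriv ψ y)^2) s := by
    intro s
    have heq : f = fun u => ∫ y in Set.Ioi (0:ℝ), FF ω p c m k ψ u y := by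
      funext u
      rw [hf u, hderiv2, hderiv1]
      rfl
    rw [heq, hderiv1]
    have h := (hmain s).2
    convert h using 1
    rw [← integral_const_mul]
    rfl
  refine ⟨hconc1, ?_⟩
  -- conclusion, part 2
  have h0 := (hconc1 0).deriv
  rw [h0, hderiv1]
  simp only [add_zero]
  have hq1neg : ∀ y : ℝ, 0 < y → Q1 c m k y < 0 := by
    intro y hy
    have hs : 0 < Real.sinh (k*y) := Real.sinh_pos_iff.mpr (mul_pos hk hy)
    unfold Q1
    exact mul_neg_of_neg_of_pos (neg_lt_zero.mpr (by positivity))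
      (mul_pos (Real.rpow_pos_of_pos (Real.cosh_pos _) _) hs)
  have hgneg : ∀ y : ℝ, 0 < y → ψ y ^ (p-2) * Q1 c m k y * Q1 c m k y^2 < 0 := by
    intro y hy
    have h1 := hq1neg y hy
    have h2 : 0 < Q1 c m k y^2 := by nlinarith
    exact mul_neg_of_neg_of_pos
      (mul_neg_of_pos_of_neg (Real.rpow_pos_of_pos (hψpos y) _) h1) h2
  have hIg : IntegrableOn (fun y => ψ y ^ (p-2) * Q1 c m k y * Q1 c m k y^2)
      (Set.Ioi (0:ℝ)) := by
    apply aux_int hk h2m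
      (((hcontψ.rpow_const (fun y => Or.inl (hψpos _).ne')).mul hcontQ1).mul (hcontQ1.pow 2))
      (C := c^(p-1)*(m*k) * (c*m*k)^2)
    intro y
    simp only [Pi.mul_apply, Pi.pow_apply]
    rw [abs_mul]
    calc |ψ y ^ (p-2) * Q1 c m k y| * |Q1 c m k y^2|
        ≤ (c^(p-1)*(m*k)) * ((c*m*k)^2 * Real.cosh (k*y) ^ (-(2*m))) :=
          mul_le_mul (hB4 y) (hQ1sqb y) (abs_nonneg _) (by positivity)
      _ = c^(p-1)*(m*k) * (c*m*k)^2 * Real.cosh (k*y) ^ (-(2*m)) := by ring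
  have hI : ∫ y in Set.Ioi (0:ℝ), ψ y ^ (p-2) * Q1 c m k y * Q1 c m k y^2 < 0 := by
    have h1 : 0 < ∫ y in Set.Ioi (0:ℝ), -(ψ y ^ (p-2) * Q1 c m k y * Q1 c m k y^2) := by
      rw [setIntegral_pos_iff_support_of_nonneg_ae]
      · have hsub : Set.Ioi (0:ℝ) ⊆
            Function.support (fun y => -(ψ y ^ (p-2) * Q1 c m k y * Q1 c m k y^2))
              ∩ Set.Ioi 0 := by
          intro y hy
          refine ⟨?_, hy⟩
          simp only [Function.mem_support]
          exact (neg_pos.mpr (hgneg y hy)).ne'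
        calc (0:ENNReal) < volume (Set.Ioi (0:ℝ)) := by
              rw [Real.volume_Ioi]; exact ENNReal.zero_lt_top
          _ ≤ _ := measure_mono hsub
      · filter_upwards [ae_restrict_mem measurableSet_Ioi] with y hy
        exact (neg_pos.mpr (hgneg y hy)).le
      · exact hIg.neg
    rw [integral_neg] at h1; linarith
  have hc2 : -(p*(p-1)) < 0 := by nlinarith
  exact mul_pos_of_neg_of_neg hc2 hI
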